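/- Let λ ∈ (0,1) and σ > 0. Let c be the unique zero of f(c) = exp((c²−1)/c) − c²/(1−λ) in (1, ∞), set s̄ = exp((c²−1)/c) and g(s) = ((c+1) + c·log s)/(c+1 − log s), and define μ̃(s) = σ²·g'(s)²·s²/(g(s)(c+g(s))) and σ̃(s) = σ·g'(s)·s/g(s). Then ∫₁^{s̄} (μ̃(s)²/(2σ̃(s)²)) · (1/(log s̄)) · s^(−1) ds = σ² / (2(1+c)(1+c − log s̄)). -/

import Mathlib

open Real MeasureTheory intervalIntegral

theorem growth_optimal_growth_rate_closed_form_theta_eq_half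
    (lam sigma c sbar : ℝ) (g mutilde sigmatilde : ℝ → ℝ)
    (hlam : lam ∈ Set.Ioo (0:ℝ) 1) (hsigma : 0 < sigma)
    (hcI : c ∈ Set.Ioi (1:ℝ))
    (hfc : Real.exp ((c^2 - 1)/c) - c^2 / (1 - lam) = 0)
    (hsbar : sbar = Real.exp ((c^2 - 1)/c))
    (hg : ∀ s : ℝ, g s = ((c + 1) + c * Real.log s) / (c + 1 - Real.log s))
    (hmutilde : ∀ s : ℝ, mutilde s = sigma^2 * (deriv g s)^2 * s^2 / (g s * (c + g s)))
    (hsigmatilde : ∀ s : ℝ, sigmatilde s = sigma * deriv g s * s / g s) :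
    ∫ s in (1:ℝ)..sbar,
        (mutilde s)^2 / (2 * (sigmatilde s)^2) * (1 / Real.log sbar) * s⁻¹
      = sigma^2 / (2 * (1 + c) * (1 + c - Real.log sbar)) := by
  have hc : (1:ℝ) < c := hcI
  have hc0 : (0:ℝ) < c := lt_trans one_pos hc
  have hL : Real.log sbar = (c^2 - 1)/c := by rw [hsbar, Real.log_exp]
  have hLpos : 0 < Real.log sbar := by
    rw [hL]
    apply div_pos _ hc0
    nlinarith
  have hLlt : Real.log sbar < c + 1 := by
    rw [hL]
    rw [div_lt_iff₀ hc0]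
    nlinarith
  have hsbar1 : (1:ℝ) < sbar := by
    rw [hsbar]
    calc (1:ℝ) = Real.exp 0 := (Real.exp_zero).symm
    _ < _ := by
      apply Real.exp_lt_exp.mpr
      have := hLpos; rw [hL] at this; linarith
  have huIcc : Set.uIcc (1:ℝ) sbar = Set.Icc 1 sbar := Set.uIcc_of_le (le_of_lt hsbar1)
  set Lb := Real.log sbar with hLb
  -- basic facts on the interval
  have hmem : ∀ s ∈ Set.uIcc (1:ℝ) sbar, 1 ≤ s ∧ 0 ≤ Real.log s ∧ Real.log s < c + 1 := by
    intro s hs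
    rw [huIcc] at hs
    obtain ⟨h1, h2⟩ := hs
    refine ⟨h1, Real.log_nonneg h1, ?_⟩
    calc Real.log s ≤ Real.log sbar := Real.log_le_log (by linarith) h2
    _ < c + 1 := hLlt
  -- derivative of g
  have hgfun : g = fun s => ((c + 1) + c * Real.log s) / (c + 1 - Real.log s) := funext hg
  have hderivg : ∀ s : ℝ, 0 < s → Real.log s < c + 1 →
      deriv g s = (c+1)^2 / (s * (c + 1 - Real.log s)^2) := by
    intro s hs hls
    have hden : c + 1 - Real.log s ≠ 0 := by linarith
    have hlog : HasDerivAt Real.log s⁻¹ s := Real.hasDerivAt_log (ne_of_gt hs)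
    have hnum : HasDerivAt (fun s => (c + 1) + c * Real.log s) (c * s⁻¹) s :=
      ((hlog.const_mul c).const_add (c+1))
    have hdenf : HasDerivAt (fun s => c + 1 - Real.log s) (0 - s⁻¹) s :=
      (hasDerivAt_const s (c+1)).sub hlog
    have hdg : HasDerivAt g ((c * s⁻¹ * (c + 1 - Real.log s) -
        ((c + 1) + c * Real.log s) * (0 - s⁻¹)) / (c + 1 - Real.log s)^2) s := by
      rw [hgfun]
      exact hnum.div hdenf hden
    rw [hdg.deriv]
    field_simp
    ring
  -- pointwise simplification of the integrand
  have heq : Set.EqOn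
      (fun s => (mutilde s)^2 / (2 * (sigmatilde s)^2) * (1 / Lb) * s⁻¹)
      (fun s => sigma^2 / (2 * Lb) * (s⁻¹ / (c + 1 - Real.log s)^2))
      (Set.uIcc (1:ℝ) sbar) := by
    intro s hs
    obtain ⟨h1, hl0, hlc⟩ := hmem s hs
    have hs0 : (0:ℝ) < s := lt_of_lt_of_le one_pos h1
    have hden : (0:ℝ) < c + 1 - Real.log s := by linarith
    have hdg := hderivg s hs0 hlc
    have hgv := hg s
    have hgpos : 0 < g s := by
      rw [hgv]
      apply div_pos _ hden
      nlinarith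
    have hcg : c + g s = (c+1)^2 / (c + 1 - Real.log s) := by
      rw [hgv]; field_simp; ring
    simp only [hmutilde s, hsigmatilde s, hdg, hcg, hgv]
    have hc1 : (0:ℝ) < c + 1 := by linarith
    field_simp
    ring
  rw [intervalIntegral.integral_congr heq]
  -- FTC
  have hFTC : ∫ s in (1:ℝ)..sbar, sigma^2 / (2 * Lb) * (s⁻¹ / (c + 1 - Real.log s)^2)
      = sigma^2 / (2 * Lb) * (c + 1 - Real.log sbar)⁻¹
        - sigma^2 / (2 * Lb) * (c + 1 - Real.log 1)⁻¹ := by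
    apply intervalIntegral.integral_eq_sub_of_hasDerivAt
    · intro s hs
      obtain ⟨h1, hl0, hlc⟩ := hmem s hs
      have hs0 : (0:ℝ) < s := lt_of_lt_of_le one_pos h1
      have hden : c + 1 - Real.log s ≠ 0 := by
        have : (0:ℝ) < c + 1 - Real.log s := by linarith
        linarith
      have hlog : HasDerivAt Real.log s⁻¹ s := Real.hasDerivAt_log (ne_of_gt hs0)
      have hdenf : HasDerivAt (fun s => c + 1 - Real.log s) (0 - s⁻¹) s :=
        (hasDerivAt_const s (c+1)).sub hlog
      have := ((hdenf.inv hden).const_mul (sigma^2 / (2 * Lb)))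
      convert this using 1
      all_goals first | rfl | ring
    · apply ContinuousOn.intervalIntegrable
      apply ContinuousOn.mul continuousOn_const
      apply ContinuousOn.div
      · apply ContinuousOn.inv₀ continuousOn_id
        intro s hs
        have := (hmem s hs).1
        simp only [id]
        intro h; rw [h] at this; linarith
      · apply ContinuousOn.pow
        apply ContinuousOn.sub continuousOn_const
        apply Real.continuousOn_log.mono
        intro s hs
        have := (hmem s hs).1
        simp only [Set.mem_compl_iff, Set.mem_singleton_iff]
        intro h; rw [h] at this; linarith
      · intro s hs
        obtain ⟨h1, hl0, hlc⟩ := hmem s hs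
        apply pow_ne_zero
        intro h; linarith
  rw [hFTC]
  rw [Real.log_one]
  have h1 : Lb ≠ 0 := ne_of_gt hLpos
  have h2 : c + 1 - Lb ≠ 0 := by
    have : (0:ℝ) < c + 1 - Lb := by linarith
    linarith
  have h3 : c + (1:ℝ) ≠ 0 := by linarith
  have h4 : (1:ℝ) + c - Lb ≠ 0 := by rw [show (1:ℝ) + c - Lb = c + 1 - Lb by ring]; exact h2
  have h5 : (1:ℝ) + c ≠ 0 := by linarith
  simp only [← hLb]
  field_simp
  ring
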